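/- Let X, Y, Y₁, Y₂ be objects of 𝒟 with Y ≅ Y₁ ⊕ Y₂, and suppose there is a distinguished triangle Y₁ → X → Y₂ → Y₁[1]. Then there exists a distinguished triangle Y → X ⊕ Y₂ → Y₂ → Y[1]; in particular X ≤_Δ Y, i.e. every ext-degeneration is a degeneration. -/

import Mathlib

open CategoryTheory CategoryTheory.Limits CategoryTheory.Pretriangulated

universe v u

variable {C : Type u} [Category.{v} C] [Preadditive C] [HasZeroObject C]
  [HasShift C ℤ] [∀ n : ℤ, (shiftFunctor C n).Additive] [Pretriangulated C]
  [HasBinaryBiproducts C]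

/-- `X ≤_Δ Y`: `X` degenerates to `Y` if there is an object `Z` and a distinguished
triangle `Y → X ⊞ Z → Z → Y⟦1⟧`. -/
def degen (X Y : C) : Prop :=
  ∃ (Z : C) (f : Y ⟶ X ⊞ Z) (g : X ⊞ Z ⟶ Z) (h : Z ⟶ Y⟦(1 : ℤ)⟧),
    Triangle.mk f g h ∈ distTriang C

lemma biprod_contractible_distinguished (T : Triangle C) (hT : T ∈ distTriang C) :
    Triangle.mk (biprod.map T.mor₁ (𝟙 T.obj₃))
      (biprod.fst ≫ T.mor₂ : T.obj₂ ⊞ T.obj₃ ⟶ T.obj₃)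
      (T.mor₃ ≫ (biprod.inl : T.obj₁ ⟶ T.obj₁ ⊞ T.obj₃)⟦(1 : ℤ)⟧') ∈ distTriang C := by
  let F : WalkingPair → Triangle C :=
    fun j => WalkingPair.casesOn j T (contractibleTriangle T.obj₃)
  have hF : ∀ j, F j ∈ distTriang C := by
    rintro (_ | _)
    · exact hT
    · exact contractible_distinguished _
  have hP := productTriangle_distinguished
    (fun j : WalkingPair => WalkingPair.casesOn j T
      (Triangle.mk' T.obj₃ T.obj₃ (contractibleTriangle T.obj₃).obj₃ (𝟙 T.obj₃) 0 0)) hF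
  dsimp only [productTriangle, Triangle.mk] at hP
  dsimp only [Triangle.mk]
  refine isomorphic_distinguished _ hP _ (Iso.symm ?_)
  refine Triangle.isoMk _ _
    (⟨biprod.lift (Pi.π _ WalkingPair.left) (Pi.π _ WalkingPair.right),
      Pi.lift (fun j => WalkingPair.casesOn j
        (biprod.fst : T.obj₁ ⊞ T.obj₃ ⟶ _) biprod.snd), ?_, ?_⟩)
    (⟨biprod.lift (Pi.π _ WalkingPair.left) (Pi.π _ WalkingPair.right),
      Pi.lift (fun j => WalkingPair.casesOn j
        (biprod.fst : T.obj₂ ⊞ T.obj₃ ⟶ _) biprod.snd), ?_, ?_⟩)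
    (⟨Pi.π _ WalkingPair.left,
      Pi.lift (fun j => WalkingPair.casesOn j (𝟙 T.obj₃) 0), ?_, ?_⟩) ?_ ?_ ?_
  · apply Pi.hom_ext; rintro (_ | _) <;>
      simp <;> exact biprod.lift_snd _ _
  · apply biprod.hom_ext <;> simp
  · apply Pi.hom_ext; rintro (_ | _) <;>
      simp <;> exact biprod.lift_snd _ _
  · apply biprod.hom_ext <;> simp
  · apply Pi.hom_ext; rintro (_ | _)
    · simp
    · exact ((isZero_zero C).eq_of_tgt _ _)
  · simp
  · apply biprod.hom_ext <;> simp
  · simp [productTriangle]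
  · have hpi : ∀ (G : WalkingPair → C) j, inv (piComparison (shiftFunctor C (1:ℤ)) G) ≫
        (shiftFunctor C (1:ℤ)).map (Pi.π G j) =
        Pi.π (fun j => (shiftFunctor C (1:ℤ)).obj (G j)) j := fun G j => by
      rw [IsIso.inv_comp_eq, piComparison_comp_π]
    haveI : PreservesBinaryBiproducts (shiftFunctor C (1:ℤ)) :=
      preservesBinaryBiproducts_of_preservesBiproducts _
    dsimp [productTriangle]
    rw [← cancel_mono ((shiftFunctor C (1:ℤ)).mapBiprod T.obj₁ T.obj₃).hom]
    apply biprod.hom_ext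
    · simp only [Functor.mapBiprod_hom, Category.assoc, biprod.lift_fst,
        ← Functor.map_comp, biprod.lift_fst]
      rw [hpi _ WalkingPair.left]
      simp
    · simp only [Functor.mapBiprod_hom, Category.assoc, biprod.lift_snd,
        ← Functor.map_comp, biprod.lift_snd]
      rw [hpi _ WalkingPair.right]
      simp

/-- If `Y ≅ Y₁ ⊞ Y₂` and there is a distinguished triangle
`Y₁ → X → Y₂ → Y₁⟦1⟧`, then there is a distinguished triangle
`Y → X ⊞ Y₂ → Y₂ → Y⟦1⟧`; in particular `X ≤_Δ Y`: every ext-degeneration is a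
degeneration. -/
theorem stmt_3 (X Y Y₁ Y₂ : C) (e : Y ≅ Y₁ ⊞ Y₂)
    (u : Y₁ ⟶ X) (v : X ⟶ Y₂) (w : Y₂ ⟶ Y₁⟦(1 : ℤ)⟧)
    (hT : Triangle.mk u v w ∈ distTriang C) :
    (∃ (f : Y ⟶ X ⊞ Y₂) (g : X ⊞ Y₂ ⟶ Y₂) (h : Y₂ ⟶ Y⟦(1 : ℤ)⟧),
      Triangle.mk f g h ∈ distTriang C) ∧ degen X Y := by
  have key : Triangle.mk (e.hom ≫ biprod.map u (𝟙 Y₂))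
      (biprod.fst ≫ v : X ⊞ Y₂ ⟶ Y₂)
      (w ≫ ((biprod.inl : Y₁ ⟶ Y₁ ⊞ Y₂) ≫ e.inv)⟦(1 : ℤ)⟧') ∈ distTriang C := by
    refine isomorphic_distinguished _
      (biprod_contractible_distinguished (Triangle.mk u v w) hT) _ ?_
    exact Triangle.isoMk _ _ e (Iso.refl _) (Iso.refl _)
      (by dsimp only [Triangle.mk]; simp) (by dsimp only [Triangle.mk]; simp)
      (by dsimp only [Triangle.mk]; simp [← Functor.map_comp])
  exact ⟨⟨_, _, _, key⟩, Y₂, _, _, _, key⟩
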